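/- Let (S,+) be a commutative semigroup and let F be a finite nonempty subset of S. Then for any piecewise syndetic set M ⊆ S, the set {(a,n) ∈ S × ℕ : a + n·F ⊆ M} is nonempty; in particular, M contains a homothetic copy of F. -/
import Mathlib


/-- `A` is thick in an additive commutative semigroup. -/
def Thick {T : Type*} [AddCommSemigroup T] (A : Set T) : Prop :=
  ∀ E : Finset T, E.Nonempty → ∃ z : T, ∀ e ∈ E, e + z ∈ A

/-- `A` is piecewise syndetic. -/
def PiecewiseSyndetic {T : Type*} [AddCommSemigroup T] (A : Set T) : Prop :=
  ∃ G : Finset T, G.Nonempty ∧ Thick {s : T | ∃ g ∈ G, g + s ∈ A}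

/-- `pnsmul n x` is the sum of `x` with itself `n` times, for a positive integer `n`. -/
def pnsmul {S : Type*} [AddSemigroup S] (n : ℕ+) (x : S) : S :=
  Nat.rec (motive := fun _ => S) x (fun _ y => y + x) n.natPred

namespace Stmt5Aux

variable {S : Type*} [AddCommSemigroup S]

/-- Embedding of `S` into the monoid obtained by adjoining an identity. -/
def emb (s : S) : WithOne (Multiplicative S) := (Multiplicative.ofAdd s : Multiplicative S)

lemma emb_add (a b : S) : emb (a + b) = emb a * emb b := by
  simp [emb, WithOne.coe_mul]

lemma emb_injective : Function.Injective (emb (S := S)) := by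
  intro a b h
  have := WithOne.coe_inj.mp h
  exact Multiplicative.ofAdd.injective this

lemma emb_rec (x : S) (k : ℕ) :
    emb (Nat.rec (motive := fun _ => S) x (fun _ y => y + x) k) = emb x ^ (k + 1) := by
  induction k with
  | zero => simp
  | succ k ih =>
    show emb (_ + x) = _
    rw [emb_add, ih, ← pow_succ]

lemma emb_pnsmul (n : ℕ+) (x : S) : emb (pnsmul n x) = emb x ^ (n : ℕ) := by
  rw [pnsmul, emb_rec, PNat.natPred_add_one]

lemma key (t : S) (m : WithOne (Multiplicative S)) : ∃ b : S, emb t * m = emb b := by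
  rcases eq_or_ne m 1 with rfl | hm
  · exact ⟨t, mul_one _⟩
  · obtain ⟨p, hp⟩ := WithOne.ne_one_iff_exists.mp hm
    refine ⟨t + Multiplicative.toAdd p, ?_⟩
    rw [emb_add, ← hp]
    rfl

end Stmt5Aux

open Stmt5Aux in
/-- Any piecewise syndetic subset of a commutative semigroup contains a homothetic copy
of any finite nonempty set `F`: the set `{(a, n) : a + n·F ⊆ M}` is nonempty. -/
theorem stmt5 {S : Type*} [AddCommSemigroup S] (F : Finset S) (hF : F.Nonempty)
    (M : Set S) (hM : PiecewiseSyndetic M) :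
    {p : S × ℕ+ | ∀ x ∈ F, p.1 + pnsmul p.2 x ∈ M}.Nonempty := by
  classical
  obtain ⟨G, hG, hT⟩ := hM
  obtain ⟨t, ht⟩ := hF
  obtain ⟨ι, _inst, hι⟩ :=
    Combinatorics.Line.exists_mono_in_high_dimension {x // x ∈ F} {g // g ∈ G}
  -- the "cube evaluation" map into S
  have he : ∀ v : ι → {x // x ∈ F}, ∃ b : S, emb t * ∏ i, emb (v i : S) = emb b :=
    fun v => key t _
  choose e he using he
  set E : Finset S := Finset.image e Finset.univ with hE
  have hEne : E.Nonempty := ⟨e (fun _ => ⟨t, ht⟩), Finset.mem_image_of_mem _ (Finset.mem_univ _)⟩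
  obtain ⟨z, hz⟩ := hT E hEne
  have hz' : ∀ v : ι → {x // x ∈ F}, ∃ g ∈ G, g + (e v + z) ∈ M := by
    intro v
    exact hz (e v) (Finset.mem_image_of_mem _ (Finset.mem_univ _))
  choose g hgG hgM using hz'
  obtain ⟨l, c, hc⟩ := hι (fun v => (⟨g v, hgG v⟩ : {g // g ∈ G}))
  set s : Finset ι := Finset.univ.filter (fun i => l.idxFun i = none) with hs
  have ha : 0 < s.card := by
    refine Finset.card_pos.mpr ⟨l.proper.choose, ?_⟩
    rw [hs, Finset.mem_filter]
    exact ⟨Finset.mem_univ _, l.proper.choose_spec⟩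
  set a : ℕ+ := ⟨s.card, ha⟩ with hadef
  set Q : WithOne (Multiplicative S) := ∏ i ∈ sᶜ, emb (l ⟨t, ht⟩ i : S) with hQ
  obtain ⟨b, hb⟩ := key t Q
  -- compute e (l x)
  have hcomp : ∀ x : {x // x ∈ F}, e (l x) = b + pnsmul a (x : S) := by
    intro x
    apply emb_injective
    rw [← he (l x)]
    have hsplit : (∏ i, emb (l x i : S)) = (∏ i ∈ s, emb (l x i : S)) * ∏ i ∈ sᶜ, emb (l x i : S) :=
      (Finset.prod_mul_prod_compl s _).symm
    have h1 : (∏ i ∈ s, emb (l x i : S)) = emb (x : S) ^ s.card := by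
      rw [← Finset.prod_const]
      refine Finset.prod_congr rfl fun i hi => ?_
      rw [hs, Finset.mem_filter] at hi
      rw [l.apply_none _ _ hi.2]
    have h2 : (∏ i ∈ sᶜ, emb (l x i : S)) = Q := by
      rw [hQ]
      refine Finset.prod_congr rfl fun i hi => ?_
      rw [hs, Finset.compl_filter, Finset.mem_filter] at hi
      obtain ⟨y, hy⟩ := Option.ne_none_iff_exists.mp hi.2
      rw [l.apply_some hy.symm, l.apply_some hy.symm]
    rw [hsplit, h1, h2, emb_add, emb_pnsmul]
    have : emb t * (emb (x : S) ^ s.card * Q) = (emb t * Q) * emb (x : S) ^ s.card := by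
      rw [mul_comm (emb (x : S) ^ s.card) Q, ← mul_assoc]
    rw [this, hb]
    rfl
  refine ⟨((g (l ⟨t, ht⟩) + (b + z)), a), ?_⟩
  intro x hx
  have hmem := hgM (l ⟨x, hx⟩)
  rw [hcomp ⟨x, hx⟩] at hmem
  have hgc : g (l ⟨x, hx⟩) = g (l ⟨t, ht⟩) := by
    have h1 := hc ⟨x, hx⟩
    have h2 := hc ⟨t, ht⟩
    have := h1.trans h2.symm
    exact congrArg Subtype.val this
  rw [hgc] at hmem
  have heq : g (l ⟨t, ht⟩) + (b + pnsmul a x + z) = g (l ⟨t, ht⟩) + (b + z) + pnsmul a x := by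
    have h1 : b + pnsmul a x + z = b + z + pnsmul a x := by
      rw [add_assoc, add_comm (pnsmul a x) z, ← add_assoc]
    rw [h1, ← add_assoc]
  rw [heq] at hmem
  exact hmem
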